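/- There exist a constant c > 0 and an integer N such that for all n ≥ N: Â_n ≤ A_n ≤ e^{−c n}, where A_n = Σ_{k integer, 0 ≤ k ≤ n, |k − n/2| ≥ n/4} y_{k,n} and Â_n = Σ_{k integer, 0 ≤ k ≤ n, k − n/2 ≥ n/4} y_{k,n}. -/

import Mathlib

open Real

/-- The normalized summand `y_{k,n} = C(n,k) e^{(2k-n)²/(2n)} / (√(2/(πn)) · 2ⁿ)`. -/
noncomputable def ycw (n k : ℕ) : ℝ :=
  (n.choose k : ℝ) * Real.exp ((2 * (k : ℝ) - n) ^ 2 / (2 * n)) /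
    (Real.sqrt (2 / (Real.pi * n)) * 2 ^ n)

/-- `A_n`: sum of `y_{k,n}` over `|k - n/2| ≥ n/4`. -/
noncomputable def Acw (n : ℕ) : ℝ :=
  ∑ k ∈ (Finset.range (n + 1)).filter (fun k : ℕ => (n : ℝ) / 4 ≤ |(k : ℝ) - n / 2|), ycw n k

/-- `Â_n`: sum of `y_{k,n}` over `k - n/2 ≥ n/4`. -/
noncomputable def Ahatcw (n : ℕ) : ℝ :=
  ∑ k ∈ (Finset.range (n + 1)).filter (fun k : ℕ => (n : ℝ) / 4 ≤ (k : ℝ) - n / 2), ycw n k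

noncomputable def dct : ℝ := (3/4) * Real.log 3 - Real.log 2 - 1/8

lemma log27 : Real.log 27 = 3 * Real.log 3 := by
  rw [show (27:ℝ) = 3^3 by norm_num, Real.log_pow]; push_cast; ring

lemma log16 : Real.log 16 = 4 * Real.log 2 := by
  rw [show (16:ℝ) = 2^4 by norm_num, Real.log_pow]; push_cast; ring

lemma log256 : Real.log 256 = 8 * Real.log 2 := by
  rw [show (256:ℝ) = 2^8 by norm_num, Real.log_pow]; push_cast; ring

lemma dct_pos : 0 < dct := by
  have h1 : Real.exp (1/2) < 27/16 := by
    have h2 : Real.exp (1/2) * Real.exp (1/2) = Real.exp 1 := by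
      rw [← Real.exp_add]; norm_num
    nlinarith [Real.exp_one_lt_d9, Real.exp_pos (1/2 : ℝ)]
  have h3 : (1:ℝ)/2 < Real.log (27/16) := (Real.lt_log_iff_exp_lt (by norm_num)).mpr h1
  rw [Real.log_div (by norm_num) (by norm_num), log27, log16] at h3
  unfold dct; linarith

lemma dct_le : dct ≤ Real.log 2 - 1/2 := by
  have h1 : Real.exp (3/2) < 256/27 := by
    have h2 : Real.exp (3/2) * Real.exp (3/2) = Real.exp 1 ^ 3 := by
      rw [← Real.exp_add, show (3:ℝ)/2 + 3/2 = ((3:ℕ):ℝ) * 1 by norm_num,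
        Real.exp_nat_mul]
    have h4 : Real.exp 1 ^ 3 < 2.7182818286 ^ 3 :=
      pow_lt_pow_left₀ Real.exp_one_lt_d9 (Real.exp_pos 1).le (by norm_num)
    nlinarith [Real.exp_pos (3/2 : ℝ)]
  have h3 : (3:ℝ)/2 < Real.log (256/27) := (Real.lt_log_iff_exp_lt (by norm_num)).mpr h1
  rw [Real.log_div (by norm_num) (by norm_num), log27, log256] at h3
  unfold dct; linarith

noncomputable def Gcw : ℝ → ℝ := fun v => (1+v)*Real.log (1+v) + (1-v)*Real.log (1-v) - v^2

lemma h_nonneg {v : ℝ} (h0 : 0 ≤ v) (h1 : v < 1) :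
    0 ≤ Real.log (1+v) - Real.log (1-v) - 2*v := by
  set H : ℝ → ℝ := fun x => Real.log (1+x) - Real.log (1-x) - 2*x with hH
  have key : MonotoneOn H (Set.Icc 0 v) := by
    apply monotoneOn_of_deriv_nonneg (convex_Icc 0 v)
    · apply ContinuousOn.sub
      apply ContinuousOn.sub
      · exact (continuous_const.add continuous_id).continuousOn.log
          (fun x hx => by have := hx.1; simp at this ⊢; linarith)
      · exact (continuous_const.sub continuous_id).continuousOn.log
          (fun x hx => by have := hx.2; simp at this ⊢; intro hc; linarith)
      · exact (continuous_const.mul continuous_id).continuousOn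
    · rw [interior_Icc]
      intro x hx
      have hx1 : (1:ℝ)+x ≠ 0 := by nlinarith [hx.1]
      have hx2 : (1:ℝ)-x ≠ 0 := by have := hx.2; nlinarith
      have d1 : HasDerivAt (fun y:ℝ => Real.log (1+y)) (1/(1+x)) x := by
        simpa using ((hasDerivAt_id x).const_add 1).log hx1
      have d2 : HasDerivAt (fun y:ℝ => Real.log (1-y)) (-1/(1-x)) x := by
        simpa using ((hasDerivAt_id x).const_sub 1).log hx2
      have d3 : HasDerivAt (fun y:ℝ => 2*y) 2 x := by
        simpa using (hasDerivAt_id x).const_mul 2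
      exact ((d1.sub d2).sub d3).differentiableAt.differentiableWithinAt
    · rw [interior_Icc]
      intro x hx
      have e1 : (0:ℝ) < 1+x := by nlinarith [hx.1]
      have e2 : (0:ℝ) < 1-x := by have := hx.2; nlinarith
      have d1 : HasDerivAt (fun y:ℝ => Real.log (1+y)) (1/(1+x)) x := by
        simpa using ((hasDerivAt_id x).const_add 1).log e1.ne'
      have d2 : HasDerivAt (fun y:ℝ => Real.log (1-y)) (-1/(1-x)) x := by
        simpa using ((hasDerivAt_id x).const_sub 1).log e2.ne'
      have d3 : HasDerivAt (fun y:ℝ => 2*y) 2 x := by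
        simpa using (hasDerivAt_id x).const_mul 2
      have dH : HasDerivAt H (1/(1+x) - (-1/(1-x)) - 2) x := (d1.sub d2).sub d3
      rw [dH.deriv]
      have h2 : (2:ℝ) ≤ 1/(1+x) + 1/(1-x) := by
        rw [div_add_div _ _ e1.ne' e2.ne', le_div_iff₀ (mul_pos e1 e2)]
        nlinarith [sq_nonneg x]
      have : -(-1/(1-x)) = 1/(1-x) := by ring
      linarith [h2]
  have h00 : H 0 = 0 := by simp [hH]
  have := key (Set.left_mem_Icc.mpr h0) (Set.right_mem_Icc.mpr h0) h0
  rw [h00] at this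
  simpa [hH] using this

lemma Gcw_mono : MonotoneOn Gcw (Set.Icc (0:ℝ) 1) := by
  apply monotoneOn_of_deriv_nonneg (convex_Icc 0 1)
  · unfold Gcw
    apply ContinuousOn.sub
    apply ContinuousOn.add
    · exact ((continuous_const.add continuous_id).continuousOn).mul
        ((continuous_const.add continuous_id).continuousOn.log
          (fun x hx => by have := hx.1; simp at this ⊢; linarith))
    · exact (Real.continuous_mul_log.comp (continuous_const.sub continuous_id)).continuousOn
    · exact (continuous_pow 2).continuousOn
  · rw [interior_Icc]
    intro x hx
    have e1 : (0:ℝ) < 1+x := by nlinarith [hx.1]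
    have e2 : (0:ℝ) < 1-x := by have := hx.2; nlinarith
    have d1 : HasDerivAt (fun y:ℝ => (1+y)*Real.log (1+y))
        (1*Real.log (1+x) + (1+x)*(1/(1+x))) x :=
      ((hasDerivAt_id x).const_add 1).mul
        (by simpa using ((hasDerivAt_id x).const_add 1).log e1.ne')
    have d2 : HasDerivAt (fun y:ℝ => (1-y)*Real.log (1-y))
        ((-1)*Real.log (1-x) + (1-x)*(-1/(1-x))) x :=
      ((hasDerivAt_id x).const_sub 1).mul
        (by simpa using ((hasDerivAt_id x).const_sub 1).log e2.ne')
    have d3 : HasDerivAt (fun y:ℝ => y^2) (2*x) x := by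
      simpa using hasDerivAt_pow 2 x
    exact ((d1.add d2).sub d3).differentiableAt.differentiableWithinAt
  · rw [interior_Icc]
    intro x hx
    have e1 : (0:ℝ) < 1+x := by nlinarith [hx.1]
    have e2 : (0:ℝ) < 1-x := by have := hx.2; nlinarith
    have d1 : HasDerivAt (fun y:ℝ => (1+y)*Real.log (1+y))
        (1*Real.log (1+x) + (1+x)*(1/(1+x))) x :=
      ((hasDerivAt_id x).const_add 1).mul
        (by simpa using ((hasDerivAt_id x).const_add 1).log e1.ne')
    have d2 : HasDerivAt (fun y:ℝ => (1-y)*Real.log (1-y))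
        ((-1)*Real.log (1-x) + (1-x)*(-1/(1-x))) x :=
      ((hasDerivAt_id x).const_sub 1).mul
        (by simpa using ((hasDerivAt_id x).const_sub 1).log e2.ne')
    have d3 : HasDerivAt (fun y:ℝ => y^2) (2*x) x := by
      simpa using hasDerivAt_pow 2 x
    have dG : HasDerivAt Gcw (Real.log (1+x) - Real.log (1-x) - 2*x) x := by
      have := (d1.add d2).sub d3
      exact this.congr_deriv (by
        rw [mul_one_div_cancel e1.ne', neg_div, mul_neg, mul_one_div_cancel e2.ne']
        ring)
    rw [dG.deriv]
    exact h_nonneg hx.1.le hx.2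

lemma Gcw_half : Gcw (1/2) = 2 * dct := by
  have l32 : Real.log (3/2) = Real.log 3 - Real.log 2 :=
    Real.log_div (by norm_num) (by norm_num)
  have l12 : Real.log ((1:ℝ)/2) = -Real.log 2 := by rw [one_div, Real.log_inv]
  unfold Gcw dct
  rw [show (1:ℝ)+1/2 = 3/2 by norm_num, show (1:ℝ)-1/2 = 1/2 by norm_num, l32, l12]
  ring

lemma entropy_ge (p : ℝ) (h0 : 0 ≤ p) (h1 : p ≤ 1) (hc : 1/4 ≤ |p - 1/2|) :
    dct ≤ p * Real.log p + (1-p) * Real.log (1-p) + Real.log 2 - 2*(p-1/2)^2 := by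
  suffices key : ∀ q : ℝ, 1/2 ≤ q → q ≤ 1 → 1/4 ≤ |q - 1/2| →
      dct ≤ q * Real.log q + (1-q) * Real.log (1-q) + Real.log 2 - 2*(q-1/2)^2 by
    rcases le_or_gt (1/2) p with h | h
    · exact key p h h1 hc
    · have hc' : 1/4 ≤ |(1-p) - 1/2| := by
        rw [show (1:ℝ)-p-1/2 = -(p-1/2) by ring, abs_neg]; exact hc
      have := key (1-p) (by linarith) (by linarith) hc'
      rw [show (1:ℝ)-(1-p) = p by ring, show ((1:ℝ)-p-1/2)^2 = (p-1/2)^2 by ring] at this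
      linarith
  intro q hq hq1 hqc
  have hq34 : 3/4 ≤ q := by
    rw [abs_of_nonneg (by linarith)] at hqc; linarith
  rcases eq_or_lt_of_le hq1 with h | h
  · rw [h]
    simp [Real.log_one]
    have := dct_le
    norm_num
    linarith
  · set v := 2*q - 1 with hv
    have e1 : (0:ℝ) < 1 + v := by simp only [hv]; linarith
    have e2 : (0:ℝ) < 1 - v := by simp only [hv]; linarith
    have hG : Gcw (1/2) ≤ Gcw v := by
      apply Gcw_mono (Set.mem_Icc.mpr (by norm_num))
        (Set.mem_Icc.mpr ⟨by simp only [hv]; linarith, by simp only [hv]; linarith⟩)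
      simp only [hv]; linarith
    rw [Gcw_half] at hG
    have lq : Real.log q = Real.log (1+v) - Real.log 2 := by
      rw [show q = (1+v)/2 by simp only [hv]; ring, Real.log_div e1.ne' (by norm_num)]
    have lq2 : Real.log (1-q) = Real.log (1-v) - Real.log 2 := by
      rw [show (1:ℝ)-q = (1-v)/2 by simp only [hv]; ring, Real.log_div e2.ne' (by norm_num)]
    have expand : q * Real.log q + (1-q)*Real.log (1-q) + Real.log 2 - 2*(q-1/2)^2
        = Gcw v / 2 := by
      rw [lq, lq2]
      unfold Gcw
      simp only [hv]
      ring
    rw [expand]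
    linarith

lemma choose_mul_le_one (n k : ℕ) (hk : k ≤ n) {p q : ℝ} (hp : 0 ≤ p) (hq : 0 ≤ q)
    (hpq : p + q = 1) : (n.choose k : ℝ) * p^k * q^(n-k) ≤ 1 := by
  have expand := add_pow p q n
  rw [hpq, one_pow] at expand
  rw [expand]
  have hmem : k ∈ Finset.range (n+1) := Finset.mem_range.mpr (Nat.lt_succ_of_le hk)
  calc (n.choose k : ℝ) * p^k * q^(n-k) = p^k * q^(n-k) * (n.choose k : ℝ) := by ring
    _ ≤ ∑ j ∈ Finset.range (n+1), p^j * q^(n-j) * (n.choose j : ℝ) := by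
        apply Finset.single_le_sum (f := fun j => p^j * q^(n-j) * (n.choose j : ℝ)) _ hmem
        intro j _
        positivity

lemma choose_le_entropy (n k : ℕ) (hk : k ≤ n) (hn : 0 < n) :
    (n.choose k : ℝ) ≤ Real.exp (-(n:ℝ) *
      ((k/n) * Real.log (k/n) + (1-(k:ℝ)/n) * Real.log (1-(k:ℝ)/n))) := by
  have hn' : (n:ℝ) ≠ 0 := Nat.cast_ne_zero.mpr hn.ne'
  rcases Nat.eq_zero_or_pos k with rfl | hk0
  · simp
  rcases eq_or_lt_of_le hk with rfl | hklt
  · rw [div_self hn']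
    simp
  · set p : ℝ := (k:ℝ)/n with hpdef
    have hp : 0 < p := by positivity
    have hq : 0 < 1 - p := by
      rw [hpdef, sub_pos, div_lt_one (by positivity)]
      exact_mod_cast hklt
    have key := choose_mul_le_one n k hk hp.le hq.le (by ring)
    have hp1 : p^k = Real.exp ((k:ℝ) * Real.log p) := by
      rw [← Real.exp_log hp, ← Real.exp_nat_mul, Real.exp_log hp]
    have hq1 : (1-p)^(n-k) = Real.exp (((n-k:ℕ):ℝ) * Real.log (1-p)) := by
      rw [← Real.exp_log hq, ← Real.exp_nat_mul, Real.exp_log hq]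
    rw [mul_assoc, hp1, hq1, ← Real.exp_add] at key
    have hC : (n.choose k : ℝ) ≤ Real.exp
        (-((k:ℝ) * Real.log p + ((n-k:ℕ):ℝ) * Real.log (1-p))) := by
      rw [Real.exp_neg, ← one_div]
      exact (le_div_iff₀ (Real.exp_pos _)).mpr key
    have hkr : (k:ℝ) = n * p := by rw [hpdef]; field_simp
    have hnkr : ((n-k:ℕ):ℝ) = n * (1-p) := by
      rw [Nat.cast_sub hk, hpdef]; field_simp
    have : -((k:ℝ) * Real.log p + ((n-k:ℕ):ℝ) * Real.log (1-p))
        = -(n:ℝ) * (p * Real.log p + (1-p) * Real.log (1-p)) := by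
      rw [hkr, hnkr]; ring
    rw [this] at hC
    exact hC

lemma ycw_le (n k : ℕ) (hn : 1 ≤ n) (hk : k ≤ n) (hcond : (n:ℝ)/4 ≤ |(k:ℝ) - (n:ℝ)/2|) :
    ycw n k ≤ Real.sqrt (Real.pi * n / 2) * Real.exp (-dct * n) := by
  have hn0 : (0:ℝ) < n := by exact_mod_cast hn
  have hspos : 0 < Real.sqrt (Real.pi * n / 2) :=
    Real.sqrt_pos.mpr (by positivity)
  set p := (k:ℝ)/n with hp
  have h0 : 0 ≤ p := by positivity
  have h1 : p ≤ 1 := by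
    rw [hp, div_le_one hn0]; exact_mod_cast hk
  have hcp : (1:ℝ)/4 ≤ |p - 1/2| := by
    have heq : (k:ℝ) - (n:ℝ)/2 = n * (p - 1/2) := by
      rw [hp]; field_simp
    rw [heq, abs_mul, abs_of_pos hn0] at hcond
    have := (mul_le_mul_iff_right₀ hn0).mp (by linarith : (n:ℝ) * (1/4) ≤ n * |p - 1/2|)
    linarith
  have hF := entropy_ge p h0 h1 hcp
  have hC := choose_le_entropy n k hk hn
  rw [← hp] at hC
  have hexp : (2*(k:ℝ)-n)^2/(2*n) = (n:ℝ) * (2*(p-1/2)^2) := by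
    rw [hp]; field_simp
  have hmain : (n.choose k : ℝ) * Real.exp ((2*(k:ℝ)-n)^2/(2*n))
      ≤ 2^n * Real.exp (-dct*n) := by
    calc (n.choose k : ℝ) * Real.exp ((2*(k:ℝ)-n)^2/(2*n))
        ≤ Real.exp (-(n:ℝ) * (p*Real.log p + (1-p)*Real.log (1-p)))
          * Real.exp ((n:ℝ) * (2*(p-1/2)^2)) := by
          rw [hexp]
          exact mul_le_mul_of_nonneg_right hC (Real.exp_pos _).le
      _ = Real.exp ((n:ℝ) * (-(p*Real.log p + (1-p)*Real.log (1-p)) + 2*(p-1/2)^2)) := by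
          rw [← Real.exp_add]; ring_nf
      _ ≤ Real.exp ((n:ℝ) * (Real.log 2 - dct)) := by
          apply Real.exp_le_exp.mpr
          apply mul_le_mul_of_nonneg_left _ hn0.le
          linarith
      _ = 2^n * Real.exp (-dct*n) := by
          rw [show (n:ℝ) * (Real.log 2 - dct) = (n:ℝ)*Real.log 2 + (-dct*n) by ring,
            Real.exp_add, Real.exp_nat_mul, Real.exp_log two_pos]
  have hs : Real.sqrt (2/(Real.pi * n)) = (Real.sqrt (Real.pi * n / 2))⁻¹ := by
    rw [← Real.sqrt_inv, inv_div]
  unfold ycw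
  rw [hs, div_le_iff₀ (by positivity)]
  have hcancel : Real.sqrt (Real.pi * ↑n / 2) * Real.exp (-dct * ↑n)
      * ((Real.sqrt (Real.pi * ↑n / 2))⁻¹ * 2^n) = 2^n * Real.exp (-dct * ↑n) := by
    field_simp
  rw [hcancel]
  exact hmain

lemma ycw_nonneg (n k : ℕ) : 0 ≤ ycw n k := by
  unfold ycw; positivity

theorem tail_sums_exponentially_small :
    ∃ c : ℝ, 0 < c ∧ ∃ N : ℕ, ∀ n : ℕ, N ≤ n →
      Ahatcw n ≤ Acw n ∧ Acw n ≤ Real.exp (-c * n) := by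
  have hhalf : 0 < dct/2 := by linarith [dct_pos]
  have t1 : Filter.Tendsto (fun n:ℕ => (dct/2) * n) Filter.atTop Filter.atTop :=
    Filter.Tendsto.const_mul_atTop hhalf tendsto_natCast_atTop_atTop
  have t2 := (Real.tendsto_pow_mul_exp_neg_atTop_nhds_zero 2).comp t1
  have t3 : Filter.Tendsto (fun n:ℕ => ((n:ℝ))^2 * Real.exp (-((dct/2)*n)))
      Filter.atTop (nhds 0) := by
    have t2' := t2.const_mul ((2/dct)^2)
    rw [mul_zero] at t2'
    apply t2'.congr
    intro n
    simp only [Function.comp]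
    have hd : dct ≠ 0 := ne_of_gt dct_pos
    field_simp
  have t4 : ∀ᶠ n:ℕ in Filter.atTop, ((n:ℝ))^2 * Real.exp (-((dct/2)*n)) < 1/4 :=
    t3.eventually_lt_const (by norm_num)
  obtain ⟨N0, hN0⟩ := Filter.eventually_atTop.mp t4
  refine ⟨dct/2, hhalf, max N0 1, fun n hn => ?_⟩
  have hn1 : 1 ≤ n := le_trans (le_max_right _ _) hn
  have hnN : N0 ≤ n := le_trans (le_max_left _ _) hn
  have hn0 : (0:ℝ) < n := by exact_mod_cast hn1
  constructor
  · apply Finset.sum_le_sum_of_subset_of_nonneg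
    · intro k hk
      simp only [Finset.mem_filter, Finset.mem_range] at hk ⊢
      exact ⟨hk.1, hk.2.trans (le_abs_self _)⟩
    · intro k _ _
      exact ycw_nonneg n k
  · have hcard : Acw n ≤ ((n:ℝ)+1) * (Real.sqrt (Real.pi*n/2) * Real.exp (-dct*n)) := by
      unfold Acw
      calc ∑ k ∈ (Finset.range (n + 1)).filter
            (fun k : ℕ => (n : ℝ) / 4 ≤ |(k : ℝ) - n / 2|), ycw n k
          ≤ ((Finset.range (n + 1)).filter
              (fun k : ℕ => (n : ℝ) / 4 ≤ |(k : ℝ) - n / 2|)).card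
            • (Real.sqrt (Real.pi*n/2) * Real.exp (-dct*n)) := by
            apply Finset.sum_le_card_nsmul
            intro k hk
            simp only [Finset.mem_filter, Finset.mem_range] at hk
            exact ycw_le n k hn1 (Nat.lt_succ_iff.mp hk.1) hk.2
        _ ≤ ((n:ℝ)+1) * (Real.sqrt (Real.pi*n/2) * Real.exp (-dct*n)) := by
            rw [nsmul_eq_mul]
            apply mul_le_mul_of_nonneg_right _ (by positivity)
            have := (Finset.card_filter_le (Finset.range (n+1))
              (fun k : ℕ => (n : ℝ) / 4 ≤ |(k : ℝ) - n / 2|)).trans_eq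
              (Finset.card_range (n+1))
            exact_mod_cast this
    have hpoly : ((n:ℝ)+1) * Real.sqrt (Real.pi*n/2) ≤ Real.exp ((dct/2)*n) := by
      have hb1 : Real.sqrt (Real.pi*n/2) ≤ 2*n := by
        have hle : Real.pi*n/2 ≤ (2*n)^2 := by
          nlinarith [Real.pi_le_four, hn0, (by exact_mod_cast hn1 : (1:ℝ) ≤ n)]
        calc Real.sqrt (Real.pi*n/2) ≤ Real.sqrt ((2*n)^2) := Real.sqrt_le_sqrt hle
          _ = 2*n := Real.sqrt_sq (by positivity)
      have hb2 : ((n:ℝ)+1) ≤ 2*n := by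
        have : (1:ℝ) ≤ n := by exact_mod_cast hn1
        linarith
      have hstep := hN0 n hnN
      have h4 : (n:ℝ)^2 < 1/4 * Real.exp ((dct/2)*n) := by
        rw [Real.exp_neg, ← div_eq_mul_inv] at hstep
        rw [div_lt_iff₀ (Real.exp_pos _)] at hstep
        linarith
      calc ((n:ℝ)+1) * Real.sqrt (Real.pi*n/2) ≤ (2*n) * (2*n) :=
            mul_le_mul hb2 hb1 (Real.sqrt_nonneg _) (by positivity)
        _ = 4 * (n:ℝ)^2 := by ring
        _ ≤ Real.exp ((dct/2)*n) := by linarith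
    calc Acw n ≤ ((n:ℝ)+1) * (Real.sqrt (Real.pi*n/2) * Real.exp (-dct*n)) := hcard
      _ = (((n:ℝ)+1) * Real.sqrt (Real.pi*n/2)) * Real.exp (-dct*n) := by ring
      _ ≤ Real.exp ((dct/2)*n) * Real.exp (-dct*n) :=
          mul_le_mul_of_nonneg_right hpoly (Real.exp_pos _).le
      _ = Real.exp (-(dct/2)*n) := by rw [← Real.exp_add]; ring_nf
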